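/- arXiv:1805.01767 — 5 statements merged into one kernel-verified Lean document; each statement's English description precedes it below -/
import Mathlib

section
/- Let M be the n×n complex matrix with diagonal entries 1−w_i, entries w_i in position (i, i+1) (indices mod n, so entry (n,1) equals w_n), and zeros elsewhere. Then the characteristic polynomial of M−I is p(x) = ∏_{i=1}^n (x + w_i) − ∏_{i=1}^n w_i. -/
/-- The polygon transformation matrix: diagonal entries `1 - w i`,
cyclic superdiagonal entries `w i` (entry `(i, i+1 mod n)`), zeros elsewhere. -/
def polyMat (n : ℕ) [NeZero n] (w : Fin n → ℂ) : Matrix (Fin n) (Fin n) ℂ :=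
  Matrix.of fun i j => if j = i then 1 - w i else if j = i + 1 then w i else 0

open Polynomial Matrix Equiv Fin.NatCast Fin.CommRing in
theorem charpoly_polyMat_sub_one {n : ℕ} [NeZero n] (hn : 2 ≤ n) (w : Fin n → ℂ) :
    (polyMat n w - 1).charpoly =
      (∏ i : Fin n, (Polynomial.X + Polynomial.C (w i))) - Polynomial.C (∏ i : Fin n, w i) := by
  obtain ⟨m, rfl⟩ : ∃ m, n = m + 2 := ⟨n - 2, by omega⟩
  set B := charmatrix (polyMat (m + 2) w - 1) with hBdef
  have hone : (1 : Fin (m + 2)) ≠ 0 := by simp [Fin.ext_iff]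
  have hsucc_ne : ∀ i : Fin (m + 2), i + 1 ≠ i := by
    intro i h
    have h2 : i + 1 = i + 0 := by rw [add_zero]; exact h
    exact hone (add_left_cancel h2)
  have hBdiag : ∀ i : Fin (m + 2), B i i = X + C (w i) := by
    intro i
    rw [hBdef, charmatrix_apply_eq]
    simp only [polyMat, Matrix.sub_apply, Matrix.one_apply, Matrix.of_apply, if_pos rfl,
      if_true, eq_self_iff_true]
    rw [show (1 - w i) - 1 = -w i by ring, map_neg, sub_neg_eq_add]
  have hBoff : ∀ i j : Fin (m + 2), i ≠ j → B i j = if j = i + 1 then -C (w i) else 0 := by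
    intro i j hij
    rw [hBdef, charmatrix_apply_ne _ _ _ hij]
    simp only [polyMat, Matrix.sub_apply, Matrix.one_apply, Matrix.of_apply,
      if_neg (Ne.symm hij), if_neg hij]
    split_ifs <;> simp
  -- the backward rotation
  set c : Equiv.Perm (Fin (m + 2)) := (finRotate (m + 2))⁻¹ with hcdef
  have hc : ∀ i, c i = i - 1 := by
    intro i
    have : finRotate (m + 2) (i - 1) = i := by simp [finRotate_succ_apply]
    rw [hcdef, Equiv.Perm.inv_def, Equiv.symm_apply_eq]
    exact this.symm
  have hc_ne : (1 : Equiv.Perm (Fin (m + 2))) ≠ c := by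
    intro h
    have h0 : (0 : Fin (m + 2)) = c 0 := by rw [← h]; rfl
    rw [hc 0, zero_sub] at h0
    exact hone (neg_eq_zero.mp h0.symm)
  -- nonzero contributions come only from 1 and c
  have hzero : ∀ σ : Equiv.Perm (Fin (m + 2)), σ ∉ ({1, c} : Finset (Equiv.Perm (Fin (m+2)))) →
      ∃ i, B (σ i) i = 0 := by
    intro σ hσ
    simp only [Finset.mem_insert, Finset.mem_singleton] at hσ
    push_neg at hσ
    by_contra hcon
    push_neg at hcon
    -- each column i has σ i = i or σ i = i - 1
    have key : ∀ i : Fin (m + 2), σ i = i ∨ σ i = i - 1 := by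
      intro i
      by_contra hk
      push_neg at hk
      apply hcon i
      rw [hBoff _ _ hk.1, if_neg]
      intro h
      exact hk.2 (eq_sub_of_add_eq h.symm)
    rcases hσ with ⟨h1, hcne⟩
    by_cases hid : ∀ i, σ i = i
    · exact h1 (Equiv.ext hid)
    push_neg at hid
    obtain ⟨i0, hi0⟩ := hid
    have hi0' : σ i0 = i0 - 1 := (key i0).resolve_left hi0
    have step : ∀ j : Fin (m + 2), σ j = j - 1 → σ (j - 1) = j - 1 - 1 := by
      intro j hj
      rcases key (j - 1) with h | h
      · exfalso
        have : σ (j - 1) = σ j := by rw [h, hj]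
        have := σ.injective this
        rw [sub_eq_self] at this
        exact hone this
      · exact h
    have iter : ∀ k : ℕ, σ (i0 - (k : Fin (m + 2))) = i0 - (k : Fin (m + 2)) - 1 := by
      intro k
      induction k with
      | zero => simpa using hi0'
      | succ k ih =>
        have := step _ ih
        have hcast : i0 - ((k + 1 : ℕ) : Fin (m + 2)) = i0 - (k : Fin (m + 2)) - 1 := by
          push_cast
          ring
        rw [hcast]
        exact this
    apply hcne
    apply Equiv.ext
    intro j
    have := iter ((i0 - j).val)
    rw [Fin.cast_val_eq_self, sub_sub_cancel] at this
    rw [this, hc]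
  -- restrict the determinant sum
  rw [Matrix.charpoly, ← hBdef, Matrix.det_apply]
  rw [← Finset.sum_subset (Finset.subset_univ ({1, c} : Finset (Equiv.Perm (Fin (m+2)))))
    (fun σ _ hσ => by
      obtain ⟨i, hi⟩ := hzero σ hσ
      have hp : (∏ j, B (σ j) j) = 0 := Finset.prod_eq_zero (Finset.mem_univ i) hi
      rw [hp, smul_zero])]
  rw [Finset.sum_pair hc_ne]
  have hterm1 : (Equiv.Perm.sign (1 : Equiv.Perm (Fin (m+2)))) • ∏ i, B ((1 : Equiv.Perm (Fin (m+2))) i) i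
      = ∏ i : Fin (m+2), (X + C (w i)) := by
    simp only [Equiv.Perm.sign_one, one_smul, Equiv.Perm.one_apply]
    exact Finset.prod_congr rfl fun i _ => hBdiag i
  have hBc : ∀ i : Fin (m + 2), B (c i) i = -C (w (i - 1)) := by
    intro i
    rw [hc]
    have hne : i - 1 ≠ i := by
      intro h
      rw [sub_eq_self] at h
      exact hone h
    rw [hBoff _ _ hne, if_pos (by ring)]
  have htermc : (Equiv.Perm.sign c) • ∏ i, B (c i) i = -C (∏ i : Fin (m+2), w i) := by
    have hprod : ∏ i : Fin (m+2), B (c i) i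
        = (-1 : ℂ[X]) ^ (m + 2) * C (∏ i : Fin (m+2), w i) := by
      calc ∏ i : Fin (m+2), B (c i) i = ∏ i : Fin (m+2), -C (w (i - 1)) :=
            Finset.prod_congr rfl fun i _ => hBc i
        _ = ∏ i : Fin (m+2), ((-1 : ℂ[X]) * C (w (i - 1))) :=
            Finset.prod_congr rfl fun i _ => (neg_one_mul _).symm
        _ = (-1 : ℂ[X]) ^ (m + 2) * ∏ i : Fin (m+2), C (w (i - 1)) := by
            rw [Finset.prod_mul_distrib, Finset.prod_const, Finset.card_univ, Fintype.card_fin]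
        _ = (-1 : ℂ[X]) ^ (m + 2) * C (∏ i : Fin (m+2), w i) := by
            rw [← map_prod]
            congr 1
            congr 1
            exact Fintype.prod_equiv (Equiv.subRight (1 : Fin (m+2))) _ _ (fun i => rfl)
    have hsign : Equiv.Perm.sign c = (-1 : ℤˣ) ^ (m + 1) := by
      rw [hcdef, map_inv, sign_finRotate]
      simp
    rw [hprod, hsign, Units.smul_def]
    push_cast
    rw [zsmul_eq_mul]
    push_cast
    rw [← mul_assoc, ← pow_add]
    have hmm : m + 1 + (m + 2) = 2 * (m + 1) + 1 := by ring
    rw [hmm, pow_succ, pow_mul, neg_one_sq, one_pow, one_mul, neg_one_mul]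
  rw [hterm1, htermc, ← sub_eq_add_neg]
end

section
/- Let M be the n×n complex matrix with (Mz)_i = (1−w_i) z_i + w_i z_{i+1} (indices mod n), with w_1 = 0 and all w_2, …, w_n nonzero and pairwise distinct. Fix k with 2 ≤ k ≤ n and define v ∈ ℂ^n by v_1 = 0, v_2 = 1, v_i = ∏_{j=2}^{i−1} (w_j − w_k)/w_j for 3 ≤ i ≤ k, and v_i = 0 for i > k. Then M v = (1 − w_k) v, i.e., v is an eigenvector of M with eigenvalue 1 − w_k. -/
/-- With `w 0 = 0`, the nonzero weights pairwise distinct, and `k ≠ 0`, the explicitly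
given vector `v` is an eigenvector of `M` with eigenvalue `1 - w k`.
(Indices are 0-based: `w 0` plays the role of `w_1` in the paper, etc.) -/
theorem eigenvector_polyMat {n : ℕ} [NeZero n] (hn : 2 ≤ n) (w : Fin n → ℂ)
    (hw0 : w 0 = 0) (hw : ∀ i : Fin n, i ≠ 0 → w i ≠ 0)
    (hdist : ∀ i j : Fin n, i ≠ 0 → j ≠ 0 → i ≠ j → w i ≠ w j)
    (k : Fin n) (hk : k ≠ 0)
    (v : Fin n → ℂ)
    (hv : v = fun i => if i = 0 then 0
      else if i ≤ k then ∏ j ∈ Finset.Ico (1 : Fin n) i, (w j - w k) / w j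
      else 0) :
    (polyMat n w).mulVec v = (1 - w k) • v := by
  have h1v : ((1 : Fin n) : ℕ) = 1 := by
    have : ((1 : Fin n) : ℕ) = 1 % n := rfl
    rw [this]; exact Nat.mod_eq_of_lt (by omega)
  have h1ne0 : (1 : Fin n) ≠ 0 := by
    intro h; have := congrArg Fin.val h; rw [h1v] at this; simp at this
  have hmod : ∀ i : Fin n, ((i : ℕ) + 1) % n = ((i + 1 : Fin n) : ℕ) := by
    intro i
    rw [Fin.add_def, h1v]
  have hsucc : ∀ i : Fin n, i + 1 ≠ 0 → ((i + 1 : Fin n) : ℕ) = (i : ℕ) + 1 := by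
    intro i h
    rw [← hmod i]
    rcases Nat.lt_or_ge ((i : ℕ) + 1) n with hlt | hge
    · exact Nat.mod_eq_of_lt hlt
    · exfalso
      have hi : (i : ℕ) + 1 = n := by have := i.isLt; omega
      apply h
      apply Fin.ext
      rw [← hmod i, hi]
      simp
  have hns : ∀ i : Fin n, (i : ℕ) + 1 < n → i + 1 ≠ 0 := by
    intro i hnw h
    have := congrArg Fin.val h
    rw [← hmod i, Nat.mod_eq_of_lt hnw] at this
    simp at this
  have hmul : ∀ i : Fin n, (polyMat n w).mulVec v i = (1 - w i) * v i + w i * v (i + 1) := by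
    intro i
    have hne : i + 1 ≠ i := by
      intro h
      have : (1 : Fin n) = 0 := by
        have := congrArg (fun x => x - i) h
        simpa [add_sub_cancel_left] using this
      exact h1ne0 this
    show ∑ j, (Matrix.of fun i j => if j = i then 1 - w i else if j = i + 1 then w i else 0) i j * v j = _
    simp only [Matrix.of_apply]
    rw [show (∑ j, (if j = i then 1 - w i else if j = i + 1 then w i else 0) * v j)
        = ∑ j, ((if j = i then (1 - w i) * v j else 0) + (if j = i + 1 then w i * v j else 0)) from
      Finset.sum_congr rfl (fun j _ => by
        by_cases h1 : j = i
        · subst h1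
          rw [if_pos rfl, if_pos rfl, if_neg (Ne.symm hne), add_zero]
        · by_cases h2 : j = i + 1
          · rw [if_neg h1, if_pos h2, if_neg h1, if_pos h2, zero_add]
          · rw [if_neg h1, if_neg h2, if_neg h1, if_neg h2, zero_mul, add_zero])]
    rw [Finset.sum_add_distrib, Finset.sum_ite_eq', Finset.sum_ite_eq']
    simp
  funext i
  rw [hmul i]
  simp only [Pi.smul_apply, smul_eq_mul]
  by_cases hi0 : i = 0
  · subst hi0
    simp [hv, hw0, h1ne0]
  · rcases lt_trichotomy i k with hik | hik | hik
    · -- i < k : the generic case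
      have hival : (1 : ℕ) ≤ (i : ℕ) := by
        rcases Nat.eq_zero_or_pos (i : ℕ) with h | h
        · exact absurd (Fin.ext h) hi0
        · exact h
      have hnowrap : (i : ℕ) + 1 < n := by
        have h1 := k.isLt
        have h2 : (i : ℕ) < (k : ℕ) := hik
        omega
      have hs1 : i + 1 ≠ 0 := hns i hnowrap
      have hsv : ((i + 1 : Fin n) : ℕ) = (i : ℕ) + 1 := hsucc i hs1
      have hs1k : i + 1 ≤ k := by
        rw [Fin.le_def, hsv]
        exact hik
      have hIco : Finset.Ico (1 : Fin n) (i + 1) = insert i (Finset.Ico (1 : Fin n) i) := by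
        ext j
        simp only [Finset.mem_Ico, Finset.mem_insert, Fin.lt_def, Fin.le_def, h1v, hsv,
          Fin.ext_iff]
        omega
      have hinotmem : i ∉ Finset.Ico (1 : Fin n) i := by
        simp [Finset.mem_Ico]
      have hvi : v i = ∏ j ∈ Finset.Ico (1 : Fin n) i, (w j - w k) / w j := by
        rw [hv]; simp [hi0, le_of_lt hik]
      have hvi1 : v (i + 1) = (∏ j ∈ Finset.Ico (1 : Fin n) i, (w j - w k) / w j)
          * ((w i - w k) / w i) := by
        rw [hv]
        simp only [if_neg hs1, if_pos hs1k]
        rw [hIco, Finset.prod_insert hinotmem, mul_comm]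
      rw [hvi, hvi1]
      have hwi : w i ≠ 0 := hw i hi0
      set P := ∏ j ∈ Finset.Ico (1 : Fin n) i, (w j - w k) / w j with hP
      field_simp
      ring
    · -- i = k
      subst hik
      have hvk1 : v (i + 1) = 0 := by
        by_cases h : i + 1 = 0
        · rw [hv]; simp [h]
        · have hsv := hsucc i h
          have hle : ¬ (i + 1 ≤ i) := by
            rw [Fin.le_def, hsv]; omega
          rw [hv]; simp [h, hle]
      rw [hvk1]
      ring
    · -- k < i
      have hvi : v i = 0 := by
        rw [hv]; simp [hi0, not_le.mpr hik]
      have hvi1 : v (i + 1) = 0 := by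
        by_cases h : i + 1 = 0
        · rw [hv]; simp [h]
        · have hsv := hsucc i h
          have hle : ¬ (i + 1 ≤ k) := by
            rw [Fin.le_def, hsv]
            have : (k : ℕ) < (i : ℕ) := hik
            omega
          rw [hv]; simp [h, hle]
      rw [hvi, hvi1]
      ring
end

section
/- Let v ∈ ℂ³ with v_{i+1} ≠ v_i for all i mod 3, and let w̃_i = v_i/(v_{i+1} − v_i). Let M̃ be the 3×3 matrix with (M̃z)_i = (1 − w̃_i) z_i + w̃_i z_{i+1} (indices mod 3). Then the eigenvalues of M̃ − I are 0, 1, and μ := w̃_1 w̃_2 + w̃_2 w̃_3 + w̃_3 w̃_1. -/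
/-- The 3×3 polygon transformation matrix. -/
def polyMat3 (w : Fin 3 → ℂ) : Matrix (Fin 3) (Fin 3) ℂ :=
  Matrix.of fun i j => if j = i then 1 - w i else if j = i + 1 then w i else 0

open Polynomial in
/-- For a triangle `v` with weights `w̃ i = v i/(v (i+1) - v i)`, the eigenvalues of
`M̃ - I` are `0`, `1` and `μ = w̃₁w̃₂ + w̃₂w̃₃ + w̃₃w̃₁`: the characteristic polynomial
of `M̃ - I` is `x (x - 1) (x - μ)`. -/
theorem charpoly_triangle (v : Fin 3 → ℂ) (hv : ∀ i : Fin 3, v (i + 1) ≠ v i)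
    (w : Fin 3 → ℂ) (hw : ∀ i, w i = v i / (v (i + 1) - v i))
    (μ : ℂ) (hμ : μ = w 0 * w 1 + w 1 * w 2 + w 2 * w 0) :
    (polyMat3 w - 1).charpoly = X * (X - 1) * (X - C μ) := by
  have e0 : ((0 : Fin 3) + 1) = 1 := rfl
  have e1 : ((1 : Fin 3) + 1) = 2 := rfl
  have e2 : ((2 : Fin 3) + 1) = 0 := rfl
  have h0 : v 1 - v 0 ≠ 0 := sub_ne_zero_of_ne (e0 ▸ hv 0)
  have h1 : v 2 - v 1 ≠ 0 := sub_ne_zero_of_ne (e1 ▸ hv 1)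
  have h2 : v 0 - v 2 ≠ 0 := sub_ne_zero_of_ne (e2 ▸ hv 2)
  have key : (1 : ℂ) + (w 0 + w 1 + w 2) + μ = 0 := by
    rw [hμ, hw 0, hw 1, hw 2, e0, e1, e2]
    field_simp
    ring
  have keyC : (1 : ℂ[X]) + (C (w 0) + C (w 1) + C (w 2)) + C μ = 0 := by
    have := congrArg C key
    simpa using this
  rw [Matrix.charpoly, Matrix.det_fin_three]
  simp only [Matrix.charmatrix_apply, Matrix.sub_apply, Matrix.one_apply, polyMat3,
    Matrix.of_apply, Matrix.diagonal_apply]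
  norm_num [Fin.ext_iff, show ((3:Fin 3):ℕ) = 0 from rfl, show ((1+1:Fin 3):ℕ) = 2 from rfl,
    show ((2+1:Fin 3):ℕ) = 0 from rfl]
  have hμC : (C μ : ℂ[X]) = C (w 0) * C (w 1) + C (w 1) * C (w 2) + C (w 2) * C (w 0) := by
    rw [hμ]; simp
  linear_combination (X : ℂ[X])^2 * keyC - (X : ℂ[X]) * hμC
end

section
/- Let v ∈ ℂ³ with v_{i+1} ≠ v_i for all i mod 3, w̃_i = v_i/(v_{i+1} − v_i), μ = w̃_1 w̃_2 + w̃_2 w̃_3 + w̃_3 w̃_1 ≠ 0, and w_i = −w̃_i/μ. Let M be the 3×3 matrix with (Mz)_i = (1 − w_i)z_i + w_i z_{i+1}. Then for every z ∈ ℂ³, Mz lies in the span of (1,1,1)^⊤ and v; i.e., M z = α(1,1,1)^⊤ + β v for some α, β ∈ ℂ. -/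
/-- One-step convergence for triangles: with weights `w i = -w̃ i/μ`, one application of the
transformation maps any initial triangle `z` into the span of the all-ones vector and `v`. -/
theorem triangle_one_step (v : Fin 3 → ℂ) (hv : ∀ i : Fin 3, v (i + 1) ≠ v i)
    (wt : Fin 3 → ℂ) (hwt : ∀ i, wt i = v i / (v (i + 1) - v i))
    (μ : ℂ) (hμ : μ = wt 0 * wt 1 + wt 1 * wt 2 + wt 2 * wt 0) (hμ0 : μ ≠ 0)
    (w : Fin 3 → ℂ) (hw : ∀ i, w i = -wt i / μ) :
    ∀ z : Fin 3 → ℂ, ∃ α β : ℂ,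
      (fun i : Fin 3 => (1 - w i) * z i + w i * z (i + 1)) = fun i => α + β * v i := by
  intro z
  have h0 : v 1 - v 0 ≠ 0 := sub_ne_zero.mpr (hv 0)
  have h1 : v 2 - v 1 ≠ 0 := sub_ne_zero.mpr (hv 1)
  have h2 : v 0 - v 2 ≠ 0 := sub_ne_zero.mpr (hv 2)
  have hwt0 : wt 0 = v 0 / (v 1 - v 0) := hwt 0
  have hwt1 : wt 1 = v 1 / (v 2 - v 1) := hwt 1
  have hwt2 : wt 2 = v 2 / (v 0 - v 2) := hwt 2
  -- polynomial relation for μ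
  have hrel : μ * ((v 1 - v 0) * (v 2 - v 1) * (v 0 - v 2)) =
      v 0 * v 1 * (v 0 - v 2) + v 1 * v 2 * (v 1 - v 0) + v 2 * v 0 * (v 2 - v 1) := by
    rw [hμ, hwt0, hwt1, hwt2]
    field_simp
  have hμval : μ = (v 0 * v 1 * (v 0 - v 2) + v 1 * v 2 * (v 1 - v 0) + v 2 * v 0 * (v 2 - v 1))
      / ((v 1 - v 0) * (v 2 - v 1) * (v 0 - v 2)) := by
    rw [← hrel]; field_simp
  have hN : v 0 * v 1 * (v 0 - v 2) + v 1 * v 2 * (v 1 - v 0) + v 2 * v 0 * (v 2 - v 1) ≠ 0 := by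
    rw [← hrel]
    exact mul_ne_zero hμ0 (mul_ne_zero (mul_ne_zero h0 h1) h2)
  have hw0 : w 0 = -(v 0 / (v 1 - v 0)) / μ := by rw [hw 0, hwt0]
  have hw1 : w 1 = -(v 1 / (v 2 - v 1)) / μ := by rw [hw 1, hwt1]
  have hw2 : w 2 = -(v 2 / (v 0 - v 2)) / μ := by rw [hw 2, hwt2]
  -- the three coefficient identities
  have c0 : (v 1 - v 2) * (1 - w 0) + (v 0 - v 1) * w 2 = 0 := by
    rw [hw0, hw2]; field_simp; linear_combination -hrel
  have c1 : (v 1 - v 2) * w 0 + (v 2 - v 0) * (1 - w 1) = 0 := by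
    rw [hw0, hw1]; field_simp; linear_combination -hrel
  have c2 : (v 2 - v 0) * w 1 + (v 0 - v 1) * (1 - w 2) = 0 := by
    rw [hw1, hw2]; field_simp; linear_combination -hrel
  set u0 : ℂ := (1 - w 0) * z 0 + w 0 * z 1 with hu0
  set u1 : ℂ := (1 - w 1) * z 1 + w 1 * z 2 with hu1
  set u2 : ℂ := (1 - w 2) * z 2 + w 2 * z 0 with hu2
  have key : (v 1 - v 2) * u0 + (v 2 - v 0) * u1 + (v 0 - v 1) * u2 = 0 := by
    rw [hu0, hu1, hu2]
    linear_combination z 0 * c0 + z 1 * c1 + z 2 * c2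
  refine ⟨(v 1 * u0 - v 0 * u1) / (v 1 - v 0), (u1 - u0) / (v 1 - v 0), ?_⟩
  funext i
  fin_cases i
  · show u0 = (v 1 * u0 - v 0 * u1) / (v 1 - v 0) + (u1 - u0) / (v 1 - v 0) * v 0
    field_simp
    ring
  · show u1 = (v 1 * u0 - v 0 * u1) / (v 1 - v 0) + (u1 - u0) / (v 1 - v 0) * v 1
    field_simp
    ring
  · show u2 = (v 1 * u0 - v 0 * u1) / (v 1 - v 0) + (u1 - u0) / (v 1 - v 0) * v 2
    have key' := key
    rw [hu0, hu1, hu2] at key'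
    field_simp
    linear_combination -key'
end

section
/- For complex numbers μ_2, μ_3 with |μ_2| > 1 and |μ_3| > 1, let ω_i = (1 − conj(μ_i))/(|μ_i|² − 1) for i = 2,3 and suppose ω_2 ≠ ω_3 and |ω_2| + |ω_3| > |ω_3 − ω_2|. Then λ := ω_2 + ((ω_3 − ω_2)/|ω_3 − ω_2|)·(|ω_2| + |ω_3 − ω_2| − |ω_3|)/2 satisfies |λ − ω_2| < |ω_2| and |λ − ω_3| < |ω_3|, hence |1+λ| > |1+λμ_2| and |1+λ| > |1+λμ_3|. -/
lemma disc_aux (μ l : ℂ) (hμ : 1 < ‖μ‖)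
    (h : ‖l - (1 - (starRingEnd ℂ) μ) / (((‖μ‖) ^ 2 - 1 : ℝ) : ℂ)‖ <
      ‖(1 - (starRingEnd ℂ) μ) / (((‖μ‖) ^ 2 - 1 : ℝ) : ℂ)‖) :
    ‖1 + l * μ‖ < ‖1 + l‖ := by
  have hs : (0:ℝ) < ‖μ‖ ^ 2 - 1 := by nlinarith
  have hμsq : μ.re ^ 2 + μ.im ^ 2 = ‖μ‖ ^ 2 := by
    rw [Complex.sq_norm, Complex.normSq_apply]; ring
  set ω : ℂ := (1 - (starRingEnd ℂ) μ) / (((‖μ‖) ^ 2 - 1 : ℝ) : ℂ) with hω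
  have h2 : Complex.normSq (l - ω) < Complex.normSq ω := by
    rw [← Complex.sq_norm, ← Complex.sq_norm]
    exact pow_lt_pow_left₀ h (norm_nonneg _) two_ne_zero
  rw [Complex.normSq_sub] at h2
  have h3 : Complex.normSq l < 2 * (l * (starRingEnd ℂ) ω).re := by linarith
  have hconj : (starRingEnd ℂ) ω = (1 - μ) / (((‖μ‖) ^ 2 - 1 : ℝ) : ℂ) := by
    rw [hω, map_div₀, map_sub, map_one, Complex.conj_conj, Complex.conj_ofReal]
  rw [hconj, mul_div_assoc', Complex.div_ofReal_re] at h3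
  rw [← mul_div_assoc, lt_div_iff₀ hs] at h3
  rw [Complex.norm_def, Complex.norm_def]
  apply Real.sqrt_lt_sqrt (Complex.normSq_nonneg _)
  simp only [Complex.normSq_apply, Complex.sub_re, Complex.sub_im, Complex.add_re, Complex.add_im,
    Complex.mul_re, Complex.mul_im, Complex.one_re, Complex.one_im] at h3 ⊢
  nlinarith [h3, hs]

/-- Case `|μ₂| > 1 ∧ |μ₃| > 1` of the quadrangle table: if the two discs `D(ωᵢ, |ωᵢ|)`
intersect, the tabulated `λ` lies in both discs, hence in `Λ_{μ₂} ∩ Λ_{μ₃}`. -/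
theorem quadrangle_case_both_gt_one (μ₂ μ₃ : ℂ)
    (h2 : 1 < ‖μ₂‖) (h3 : 1 < ‖μ₃‖)
    (ω₂ ω₃ : ℂ)
    (hω₂ : ω₂ = (1 - (starRingEnd ℂ) μ₂) / (((‖μ₂‖) ^ 2 - 1 : ℝ) : ℂ))
    (hω₃ : ω₃ = (1 - (starRingEnd ℂ) μ₃) / (((‖μ₃‖) ^ 2 - 1 : ℝ) : ℂ))
    (hne : ω₂ ≠ ω₃)
    (hint : ‖ω₃ - ω₂‖ < ‖ω₂‖ + ‖ω₃‖)
    (l : ℂ)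
    (hl : l = ω₂ + (ω₃ - ω₂) / ((‖ω₃ - ω₂‖ : ℝ) : ℂ) *
        (((‖ω₂‖ + ‖ω₃ - ω₂‖ - ‖ω₃‖) / 2 : ℝ) : ℂ)) :
    ‖l - ω₂‖ < ‖ω₂‖ ∧ ‖l - ω₃‖ < ‖ω₃‖ ∧
      ‖1 + l * μ₂‖ < ‖1 + l‖ ∧
      ‖1 + l * μ₃‖ < ‖1 + l‖ := by
  have hsub : ω₃ - ω₂ ≠ 0 := sub_ne_zero.mpr (Ne.symm hne)
  have hd : 0 < ‖ω₃ - ω₂‖ := norm_pos_iff.mpr hsub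
  set d := ‖ω₃ - ω₂‖ with hdd
  set a2 := ‖ω₂‖ with ha2
  set a3 := ‖ω₃‖ with ha3
  have tri3 : a3 ≤ a2 + d := by
    have := norm_add_le ω₂ (ω₃ - ω₂)
    simpa using this
  have tri2 : a2 ≤ a3 + d := by
    have := norm_add_le ω₃ (ω₂ - ω₃)
    rw [show ω₂ - ω₃ = -(ω₃ - ω₂) by ring, norm_neg] at this
    simpa using this
  set t : ℝ := (a2 + d - a3) / 2 with htdef
  have ht0 : 0 ≤ t := by rw [htdef]; linarith
  have htd : t ≤ d := by rw [htdef]; linarith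
  have hdC : ((d : ℝ) : ℂ) ≠ 0 := Complex.ofReal_ne_zero.mpr hd.ne'
  have eq1 : l - ω₂ = (ω₃ - ω₂) / ((d : ℝ) : ℂ) * ((t : ℝ) : ℂ) := by
    rw [hl]; ring
  have habs1 : ‖l - ω₂‖ = t := by
    rw [eq1, norm_mul, norm_div, Complex.norm_real, Real.norm_eq_abs, Complex.norm_real, Real.norm_eq_abs, abs_of_pos hd,
      ← hdd, div_self hd.ne', one_mul, abs_of_nonneg ht0]
  have eq2 : l - ω₃ = (ω₃ - ω₂) / ((d : ℝ) : ℂ) * (((t : ℝ) : ℂ) - ((d : ℝ) : ℂ)) := by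
    rw [hl]; field_simp; ring
  have habs2 : ‖l - ω₃‖ = d - t := by
    rw [eq2, norm_mul, norm_div, Complex.norm_real, Real.norm_eq_abs, abs_of_pos hd, ← hdd,
      div_self hd.ne', one_mul, ← Complex.ofReal_sub, Complex.norm_real, Real.norm_eq_abs,
      abs_of_nonpos (by linarith), neg_sub]
  have hm2 : ‖l - ω₂‖ < a2 := by rw [habs1, htdef]; linarith
  have hm3 : ‖l - ω₃‖ < a3 := by rw [habs2, htdef]; linarith
  exact ⟨hm2, hm3, disc_aux μ₂ l h2 (by rw [← hω₂]; exact hm2),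
    disc_aux μ₃ l h3 (by rw [← hω₃]; exact hm3)⟩
end
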